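/- The matrix S = (1/√3)·((0,1),(-3,0)) satisfies: for every integer matrix v = ((x,y),(z,w)) with x ≡ 0 mod 3 (equivalently, with ⟨v,u⟩ ≡ 0 mod 3 for u = ((1,0),(0,0)) under the form ⟨v,w⟩ = -det(v+w)+det v+det w), the matrix S v Sᵀ = ((w/3, -z),(-y, 3x)) again has integer entries with its (1,1) entry divisible by 3; moreover σ: v ↦ S v Sᵀ is an isometry of this lattice. -/

import Mathlib

open Matrix

/-- The bilinear form `⟨v,w⟩ = -det(v+w) + det v + det w` on `M₂(ℤ)`. -/
def mform (v w : Matrix (Fin 2) (Fin 2) ℤ) : ℤ := -((v + w).det) + v.det + w.det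

/-- For `S = (1/√3)((0,1),(-3,0))` and `v = ((x,y),(z,w)) ∈ M₂(ℤ)` with
`⟨v,u⟩ ≡ 0 mod 3` for `u = ((1,0),(0,0))` (equivalently `3 ∣ w`), the matrix
`S v Sᵀ = ((w/3,-z),(-y,3x))` again has integer entries and lies in the sublattice
`L` (its entry is divisible by 3); moreover `σ : v ↦ S v Sᵀ` is an isometry of
`(L, ⟨·,·⟩)`. -/
theorem sigma_preserves_L_and_isometry
    (x y z w : ℤ) (hw : (3 : ℤ) ∣ w)
    (x' y' z' w' : ℤ) (hw' : (3 : ℤ) ∣ w') :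
    let u : Matrix (Fin 2) (Fin 2) ℤ := !![1, 0; 0, 0]
    let v : Matrix (Fin 2) (Fin 2) ℤ := !![x, y; z, w]
    let v' : Matrix (Fin 2) (Fin 2) ℤ := !![x', y'; z', w']
    let S : Matrix (Fin 2) (Fin 2) ℝ := (Real.sqrt 3)⁻¹ • !![0, 1; -3, 0]
    let σv : Matrix (Fin 2) (Fin 2) ℤ := !![w / 3, -z; -y, 3 * x]
    let σv' : Matrix (Fin 2) (Fin 2) ℤ := !![w' / 3, -z'; -y', 3 * x']
    -- the membership condition `⟨v,u⟩ ≡ 0 mod 3` is equivalent to `3 ∣ w`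
    ((3 : ℤ) ∣ mform v u) ∧
    -- `S v Sᵀ` has integer entries, namely those of `σv`
    (S * v.map (Int.cast : ℤ → ℝ) * Sᵀ = σv.map (Int.cast : ℤ → ℝ)) ∧
    -- `σv` again lies in `L`
    ((3 : ℤ) ∣ mform σv u) ∧
    -- `σ` is an isometry of the lattice `L`
    (mform σv σv' = mform v v') := by
  obtain ⟨k, rfl⟩ := hw
  obtain ⟨k', rfl⟩ := hw'
  have hk : (3 * k) / 3 = k := by omega
  have hk' : (3 * k') / 3 = k' := by omega
  intro u v v' S σv σv'
  have hs : Real.sqrt 3 * Real.sqrt 3 = 3 := Real.mul_self_sqrt (by norm_num)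
  have hs0 : Real.sqrt 3 ≠ 0 := by positivity
  refine ⟨⟨-k, ?_⟩, ?_, ⟨-x, ?_⟩, ?_⟩
  · simp [mform, u, v, Matrix.det_fin_two_of]; ring
  · ext i j
    fin_cases i <;> fin_cases j <;>
      simp [S, v, σv, hk, Matrix.mul_apply, Fin.sum_univ_two, Matrix.smul_apply,
        Matrix.map_apply, Matrix.transpose_apply, Matrix.vecMul, dotProduct,
        Matrix.vecHead, Matrix.vecTail] <;>
      push_cast <;> field_simp <;> (first | nlinarith [hs] | linear_combination (x : ℝ) * hs |
          (rw [Real.sq_sqrt (by norm_num : (0:ℝ) ≤ 3)] <;> ring))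
  · simp [mform, u, σv, hk, Matrix.det_fin_two_of]; ring
  · simp [mform, σv, σv', v, v', hk, hk', Matrix.det_fin_two_of]; ring
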